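/- With G(n) the n×n Hankel matrix with entries 1/g_{i+j+a}, g_m = p^{2m} binom(m+q/p, m), the determinant of G(n)^{-1} equals the product over k from 0 to n-1 of p^{2(2k+a)} * ((2kp+ap+q)/q) * binom(2k+a+q/p-1, k) * binom(2k+a+q/p-1, k+a). -/

import Mathlib

open Finset Polynomial

/-- Generalized binomial coefficient `x(x-1)⋯(x-n+1)/n!` for rational `x`. -/
noncomputable def gchoose (x : ℚ) (n : ℕ) : ℚ :=
  (∏ i ∈ Finset.range n, (x - i)) / (n.factorial : ℚ)

/-- The generalized Catalan numbers `g_m = p^{2m} binom(m + q/p, m)`. -/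
noncomputable def gcat (p q : ℤ) (m : ℕ) : ℚ :=
  (p : ℚ) ^ (2 * m) * gchoose ((m : ℚ) + (q : ℚ) / (p : ℚ)) m

/-- The `n × n` Hankel matrix `G(n)` with entries `1/g_{i+j+a}`. -/
noncomputable def GHankel (p q : ℤ) (a n : ℕ) : Matrix (Fin n) (Fin n) ℚ :=
  Matrix.of fun i j => 1 / gcat p q ((i : ℕ) + (j : ℕ) + a)

/-- Rising factorial `x(x+1)⋯(x+m-1)`. -/
noncomputable def Rx (x : ℚ) (m : ℕ) : ℚ := ∏ t ∈ Finset.range m, (x + t)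

lemma Rx_add (x : ℚ) (m k : ℕ) :
    Rx x (m + k) = Rx x m * ∏ t ∈ Finset.range k, (x + m + t) := by
  rw [Rx, Rx, Finset.prod_range_add]
  congr 1
  refine Finset.prod_congr rfl fun t _ => ?_
  push_cast; ring

lemma Rx_succ (x : ℚ) (m : ℕ) : Rx x (m + 1) = Rx x m * (x + m) := by
  rw [Rx, Finset.prod_range_succ, Rx]

lemma Rx_ne_zero {x : ℚ} (hx : ∀ m : ℕ, x + (m : ℚ) ≠ 0) (m : ℕ) : Rx x m ≠ 0 :=
  Finset.prod_ne_zero_iff.mpr fun t _ => hx t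

lemma fact_mul_prod (m i : ℕ) :
    (((m + i).factorial : ℕ) : ℚ)
      = (m.factorial : ℚ) * ∏ t ∈ Finset.range i, ((m : ℚ) + 1 + t) := by
  induction i with
  | zero => simp
  | succ i ih =>
      rw [Finset.prod_range_succ, ← mul_assoc, ← ih, show m + (i+1) = (m+i) + 1 by ring,
        Nat.factorial_succ]
      push_cast; ring

/-- Pascal-type rearrangement of an alternating binomial sum. -/
lemma pascal_sum (l : ℕ) (f : ℕ → ℚ) :
    ∑ j ∈ Finset.range (l + 2), (-1 : ℚ) ^ j * ((l + 1).choose j : ℚ) * f j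
      = ∑ j ∈ Finset.range (l + 1), (-1 : ℚ) ^ j * (l.choose j : ℚ) * (f j - f (j + 1)) := by
  rw [Finset.sum_range_succ' (fun j => (-1 : ℚ) ^ j * ((l + 1).choose j : ℚ) * f j) (l + 1)]
  have e2 := Finset.sum_range_succ' (fun j => (-1 : ℚ) ^ j * (l.choose j : ℚ) * f j) (l + 1)
  have e3 : ∑ j ∈ Finset.range (l + 2), (-1 : ℚ) ^ j * (l.choose j : ℚ) * f j
      = ∑ j ∈ Finset.range (l + 1), (-1 : ℚ) ^ j * (l.choose j : ℚ) * f j := by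
    rw [Finset.sum_range_succ]
    simp [Nat.choose_succ_self]
  rw [e3] at e2
  simp only [Nat.choose_succ_succ]
  have e4 : ∑ x ∈ Finset.range (l + 1),
        (-1 : ℚ) ^ (x + 1) * ((l.choose x + l.choose (x + 1) : ℕ) : ℚ) * f (x + 1)
      = (∑ x ∈ Finset.range (l + 1), (-1 : ℚ) ^ (x + 1) * (l.choose (x + 1) : ℚ) * f (x + 1))
        - ∑ x ∈ Finset.range (l + 1), (-1 : ℚ) ^ x * (l.choose x : ℚ) * f (x + 1) := by
    rw [← Finset.sum_sub_distrib]
    refine Finset.sum_congr rfl fun x _ => ?_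
    push_cast
    ring
  rw [e4]
  simp only [mul_sub, Finset.sum_sub_distrib]
  have e5 : ∑ x ∈ Finset.range (l + 1), (-1 : ℚ) ^ (x + 1) * (l.choose (x + 1) : ℚ) * f (x + 1)
      = (∑ j ∈ Finset.range (l + 1), (-1 : ℚ) ^ j * (l.choose j : ℚ) * f j)
        - (-1 : ℚ) ^ 0 * (l.choose 0 : ℚ) * f 0 := by
    rw [e2]
    ring
  rw [e5]
  push_cast [Nat.choose_zero_right]
  ring

/-- Alternating binomial sums annihilate polynomials of degree `< l`. -/
lemma alt_sum_poly (l : ℕ) (P : Polynomial ℚ) (hP : P.degree < (l : ℕ)) :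
    ∑ j ∈ Finset.range (l + 1), (-1 : ℚ) ^ j * (l.choose j : ℚ) * P.eval (j : ℚ) = 0 := by
  induction l generalizing P with
  | zero =>
      have hP0 : P = 0 := by
        rw [← Polynomial.degree_eq_bot]
        exact Nat.WithBot.lt_zero_iff.mp (by simpa using hP)
      simp [hP0]
  | succ l ih =>
      have key := pascal_sum l (fun j => P.eval (j : ℚ))
      have hQ : ∀ j : ℕ, P.eval (j : ℚ) - P.eval ((j : ℚ) + 1)
          = (P - P.comp (Polynomial.X + 1)).eval (j : ℚ) := by
        intro j; simp [Polynomial.eval_comp]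
      set Q : Polynomial ℚ := P - P.comp (Polynomial.X + 1) with hQdef
      have hQdeg : Q.degree < (l : ℕ) := by
        by_cases hP0 : P = 0
        · have hQ0 : Q = 0 := by simp [hQdef, hP0]
          rw [hQ0, Polynomial.degree_zero]
          exact_mod_cast WithBot.bot_lt_coe l
        · have hX1 : (Polynomial.X + 1 : Polynomial ℚ).natDegree = 1 := by
            simpa using Polynomial.natDegree_X_add_C (1 : ℚ)
          have hcd : (P.comp (Polynomial.X + 1)).natDegree = P.natDegree := by
            rw [Polynomial.natDegree_comp, hX1, mul_one]
          have hlc : (P.comp (Polynomial.X + 1)).leadingCoeff = P.leadingCoeff := by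
            rw [Polynomial.leadingCoeff_comp (by rw [hX1]; norm_num)]
            have hlc1 : (Polynomial.X + 1 : Polynomial ℚ).leadingCoeff = 1 := by
              simpa using (Polynomial.monic_X_add_C (1 : ℚ)).leadingCoeff
            rw [hlc1, one_pow, mul_one]
          have hcne : P.comp (Polynomial.X + 1) ≠ 0 := by
            intro h
            apply hP0
            rw [← Polynomial.leadingCoeff_eq_zero, ← hlc, h, Polynomial.leadingCoeff_zero]
          have hdeq : P.degree = (P.comp (Polynomial.X + 1)).degree := by
            rw [Polynomial.degree_eq_natDegree hP0, Polynomial.degree_eq_natDegree hcne, hcd]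
          have h1 : Q.degree < P.degree :=
            Polynomial.degree_sub_lt hdeq hP0 hlc.symm
          have h2 : P.natDegree < l + 1 := by
            rwa [Polynomial.natDegree_lt_iff_degree_lt hP0]
          calc Q.degree < P.degree := h1
            _ = (P.natDegree : WithBot ℕ) := Polynomial.degree_eq_natDegree hP0
            _ ≤ (l : WithBot ℕ) := by exact_mod_cast Nat.lt_succ_iff.mp h2
      have key2 : ∑ j ∈ Finset.range (l + 2), (-1 : ℚ) ^ j * ((l + 1).choose j : ℚ) * P.eval (j : ℚ)
          = ∑ j ∈ Finset.range (l + 1), (-1 : ℚ) ^ j * (l.choose j : ℚ) * Q.eval (j : ℚ) := by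
        rw [key]
        refine Finset.sum_congr rfl fun j _ => ?_
        rw [← hQ j]
        push_cast
        ring
      rw [key2]
      exact ih Q hQdeg

/-- Partial fractions: `∑ (-1)^j C(l,j)/(y+j) = l! / ((y)(y+1)⋯(y+l))`. -/
lemma alt_sum_inv (l : ℕ) (y : ℚ) (hy : ∀ t : ℕ, t ≤ l → y + t ≠ 0) :
    ∑ j ∈ Finset.range (l + 1), (-1 : ℚ) ^ j * (l.choose j : ℚ) * (1 / (y + j))
      = (l.factorial : ℚ) / ∏ t ∈ Finset.range (l + 1), (y + t) := by
  induction l generalizing y with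
  | zero => simp
  | succ l ih =>
      have key := pascal_sum l (fun j => 1 / (y + j))
      rw [key]
      have split : ∑ j ∈ Finset.range (l + 1),
            (-1 : ℚ) ^ j * (l.choose j : ℚ) * (1 / (y + j) - 1 / (y + ((j : ℕ) + 1 : ℕ)))
          = (∑ j ∈ Finset.range (l + 1), (-1 : ℚ) ^ j * (l.choose j : ℚ) * (1 / (y + j)))
            - ∑ j ∈ Finset.range (l + 1), (-1 : ℚ) ^ j * (l.choose j : ℚ) * (1 / ((y + 1) + j)) := by
        rw [← Finset.sum_sub_distrib]
        refine Finset.sum_congr rfl fun j _ => ?_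
        push_cast
        ring
      rw [split, ih y (fun t ht => hy t (by omega)),
        ih (y + 1) (fun t ht => by
          have h := hy (t + 1) (by omega)
          push_cast at h
          rwa [show y + 1 + (t : ℚ) = y + ((t : ℚ) + 1) by ring])]
      have hA : (∏ t ∈ Finset.range (l + 1), (y + t)) ≠ 0 :=
        Finset.prod_ne_zero_iff.mpr fun t ht => hy t (by simp at ht; omega)
      have hB : (∏ t ∈ Finset.range (l + 1), ((y + 1) + t)) ≠ 0 := by
        refine Finset.prod_ne_zero_iff.mpr fun t ht => ?_
        have h := hy (t + 1) (by simp at ht; omega)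
        push_cast at h
        rwa [show y + 1 + (t : ℚ) = y + ((t : ℚ) + 1) by ring]
      have h1 : ∏ t ∈ Finset.range (l + 2), (y + t)
          = (∏ t ∈ Finset.range (l + 1), (y + t)) * (y + ((l : ℚ) + 1)) := by
        rw [Finset.prod_range_succ]
        push_cast
        ring
      have h2 : ∏ t ∈ Finset.range (l + 2), (y + t)
          = y * ∏ t ∈ Finset.range (l + 1), ((y + 1) + t) := by
        rw [Finset.prod_range_succ' (fun t => (y + (t : ℚ)))]
        simp only [Nat.cast_zero, add_zero]
        rw [mul_comm]
        congr 1
        refine Finset.prod_congr rfl fun t _ => ?_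
        push_cast
        ring
      have hyl : y + ((l : ℚ) + 1) ≠ 0 := by
        have h := hy (l + 1) (by omega)
        push_cast at h
        exact h
      have hrel : (∏ t ∈ Finset.range (l + 1), (y + t)) * (y + ((l : ℚ) + 1))
          = y * ∏ t ∈ Finset.range (l + 1), ((y + 1) + t) := by rw [← h1, ← h2]
      rw [h1]
      have hfact : ((l + 1).factorial : ℚ) = (l.factorial : ℚ) * ((l : ℚ) + 1) := by
        rw [Nat.factorial_succ]; push_cast; ring
      rw [hfact, div_sub_div _ _ hA hB, div_eq_div_iff (mul_ne_zero hA hB) (mul_ne_zero hA hyl)]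
      linear_combination (-((l.factorial : ℚ) * (∏ t ∈ Finset.range (l + 1), (y + t)))) * hrel


lemma coreA {x : ℚ} (hx : ∀ m : ℕ, x + (m : ℚ) ≠ 0) (a i l : ℕ) (hil : i < l) :
    ∑ j ∈ Finset.range (l + 1), (-1 : ℚ) ^ j * (l.choose j : ℚ)
        * (((i + j + a).factorial : ℚ) / ((a + j).factorial : ℚ))
        * (Rx x (a + l + j) / Rx x (i + j + a + 1)) = 0 := by
  set P : Polynomial ℚ :=
    (∏ t ∈ Finset.range i, (Polynomial.X + Polynomial.C ((a : ℚ) + 1 + t)))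
      * ∏ t ∈ Finset.range (l - 1 - i),
          (Polynomial.X + Polynomial.C (x + (i : ℚ) + (a : ℚ) + 1 + t)) with hP
  have hm1 : (∏ t ∈ Finset.range i, (Polynomial.X + Polynomial.C ((a : ℚ) + 1 + t))).Monic :=
    Polynomial.monic_prod_of_monic _ _ fun t _ => Polynomial.monic_X_add_C _
  have hm2 : (∏ t ∈ Finset.range (l - 1 - i),
      (Polynomial.X + Polynomial.C (x + (i : ℚ) + (a : ℚ) + 1 + t))).Monic :=
    Polynomial.monic_prod_of_monic _ _ fun t _ => Polynomial.monic_X_add_C _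
  have hPm : P.Monic := hm1.mul hm2
  have hnat : P.natDegree = i + (l - 1 - i) := by
    rw [hP, Polynomial.natDegree_mul hm1.ne_zero hm2.ne_zero,
      Polynomial.natDegree_prod _ _ (fun t _ => (Polynomial.monic_X_add_C _).ne_zero),
      Polynomial.natDegree_prod _ _ (fun t _ => (Polynomial.monic_X_add_C _).ne_zero)]
    simp only [Polynomial.natDegree_X_add_C, Finset.sum_const, Finset.card_range, smul_eq_mul,
      mul_one]
  have hdeg : P.degree < (l : ℕ) := by
    rw [Polynomial.degree_eq_natDegree hPm.ne_zero, hnat]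
    exact_mod_cast (by omega : i + (l - 1 - i) < l)
  have hterm : ∀ j ∈ Finset.range (l + 1),
      (-1 : ℚ) ^ j * (l.choose j : ℚ)
          * (((i + j + a).factorial : ℚ) / ((a + j).factorial : ℚ))
          * (Rx x (a + l + j) / Rx x (i + j + a + 1))
        = (-1 : ℚ) ^ j * (l.choose j : ℚ) * P.eval (j : ℚ) := by
    intro j hj
    have hF2 : ((a + j).factorial : ℚ) ≠ 0 := Nat.cast_ne_zero.mpr (Nat.factorial_ne_zero _)
    have hR2 : Rx x (i + j + a + 1) ≠ 0 := Rx_ne_zero hx _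
    have e1 : ((i + j + a).factorial : ℚ)
        = ((a + j).factorial : ℚ) * ∏ t ∈ Finset.range i, ((j : ℚ) + ((a : ℚ) + 1 + t)) := by
      have h := fact_mul_prod (a + j) i
      rw [show a + j + i = i + j + a by ring] at h
      rw [h]
      congr 1
      refine Finset.prod_congr rfl fun t _ => ?_
      push_cast; ring
    have e2 : Rx x (a + l + j)
        = Rx x (i + j + a + 1)
          * ∏ t ∈ Finset.range (l - 1 - i), ((j : ℚ) + (x + (i : ℚ) + (a : ℚ) + 1 + t)) := by
      have h := Rx_add x (i + j + a + 1) (l - 1 - i)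
      rw [show i + j + a + 1 + (l - 1 - i) = a + l + j by omega] at h
      rw [h]
      congr 1
      refine Finset.prod_congr rfl fun t _ => ?_
      push_cast; ring
    have e3 : P.eval (j : ℚ)
        = (∏ t ∈ Finset.range i, ((j : ℚ) + ((a : ℚ) + 1 + t)))
          * ∏ t ∈ Finset.range (l - 1 - i), ((j : ℚ) + (x + (i : ℚ) + (a : ℚ) + 1 + t)) := by
      rw [hP]
      simp [Polynomial.eval_prod]
    rw [e1, e2, e3]
    field_simp
  rw [Finset.sum_congr rfl hterm]
  exact alt_sum_poly l P hdeg

lemma coreB {x : ℚ} (hx : ∀ m : ℕ, x + (m : ℚ) ≠ 0) (a l : ℕ) :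
    ∑ j ∈ Finset.range (l + 1), (-1 : ℚ) ^ j * (l.choose j : ℚ)
        * (((l + j + a).factorial : ℚ) / ((a + j).factorial : ℚ))
        * (Rx x (a + l + j) / Rx x (l + j + a + 1))
      = (-1 : ℚ) ^ l * Rx x l * (l.factorial : ℚ) * Rx x (a + l) / Rx x (a + 2 * l + 1) := by
  set y : ℚ := x + (a : ℚ) + l with hy
  set A : Polynomial ℚ :=
    ∏ t ∈ Finset.range l, (Polynomial.X + Polynomial.C ((a : ℚ) + 1 + t)) with hA
  have hAmonic : A.Monic :=
    Polynomial.monic_prod_of_monic _ _ fun t _ => Polynomial.monic_X_add_C _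
  set Q : Polynomial ℚ := A /ₘ (Polynomial.X - Polynomial.C (-y)) with hQ
  have hmo : (Polynomial.X - Polynomial.C (-y)).Monic := Polynomial.monic_X_sub_C _
  have hAdecomp : A = Polynomial.C (A.eval (-y)) + (Polynomial.X - Polynomial.C (-y)) * Q := by
    conv_lhs => rw [← Polynomial.modByMonic_add_div A (Polynomial.X - Polynomial.C (-y))]
    rw [Polynomial.modByMonic_X_sub_C_eq_C_eval]
  have hAnat : A.natDegree = l := by
    rw [hA, Polynomial.natDegree_prod _ _ (fun t _ => (Polynomial.monic_X_add_C _).ne_zero)]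
    simp only [Polynomial.natDegree_X_add_C, Finset.sum_const, Finset.card_range, smul_eq_mul,
      mul_one]
  have hQdeg : Q.degree < (l : ℕ) := by
    have h := Polynomial.degree_divByMonic_lt A (Polynomial.X - Polynomial.C (-y)) hAmonic.ne_zero
      (by rw [Polynomial.degree_X_sub_C]; norm_num)
    rwa [Polynomial.degree_eq_natDegree hAmonic.ne_zero, hAnat] at h
  have hev : A.eval (-y) = (-1 : ℚ) ^ l * Rx x l := by
    rw [hA, Polynomial.eval_prod]
    have h0 : ∀ t ∈ Finset.range l,
        (Polynomial.X + Polynomial.C ((a : ℚ) + 1 + t)).eval (-y)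
          = (-1) * (x + ((l : ℚ) - 1 - t)) := by
      intro t ht
      simp only [Polynomial.eval_add, Polynomial.eval_X, Polynomial.eval_C, hy]
      ring
    rw [Finset.prod_congr rfl h0, Finset.prod_mul_distrib, Finset.prod_const, Finset.card_range]
    congr 1
    rw [Rx, ← Finset.prod_range_reflect (fun t => x + (t : ℚ)) l]
    refine Finset.prod_congr rfl fun t ht => ?_
    simp only [Finset.mem_range] at ht
    rw [show l - 1 - t = l - (t + 1) by omega, Nat.cast_sub (by omega)]
    push_cast; ring
  have hterm : ∀ j ∈ Finset.range (l + 1),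
      (-1 : ℚ) ^ j * (l.choose j : ℚ)
          * (((l + j + a).factorial : ℚ) / ((a + j).factorial : ℚ))
          * (Rx x (a + l + j) / Rx x (l + j + a + 1))
        = (-1 : ℚ) ^ j * (l.choose j : ℚ) * Q.eval (j : ℚ)
          + A.eval (-y) * ((-1 : ℚ) ^ j * (l.choose j : ℚ) * (1 / (y + j))) := by
    intro j hj
    have hF2 : ((a + j).factorial : ℚ) ≠ 0 := Nat.cast_ne_zero.mpr (Nat.factorial_ne_zero _)
    have hR2 : Rx x (a + l + j) ≠ 0 := Rx_ne_zero hx _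
    have hyj : y + (j : ℚ) ≠ 0 := by
      have h := hx (a + l + j)
      rw [hy]
      push_cast at h ⊢
      intro hc; exact h (by linarith)
    have e1 : ((l + j + a).factorial : ℚ)
        = ((a + j).factorial : ℚ) * ∏ t ∈ Finset.range l, ((j : ℚ) + ((a : ℚ) + 1 + t)) := by
      have h := fact_mul_prod (a + j) l
      rw [show a + j + l = l + j + a by ring] at h
      rw [h]
      congr 1
      refine Finset.prod_congr rfl fun t _ => ?_
      push_cast; ring
    have e2 : Rx x (l + j + a + 1) = Rx x (a + l + j) * (y + (j : ℚ)) := by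
      have h := Rx_succ x (a + l + j)
      rw [show a + l + j + 1 = l + j + a + 1 by ring] at h
      rw [h, hy]
      congr 1
      push_cast; ring
    have e3 : A.eval (j : ℚ) = ∏ t ∈ Finset.range l, ((j : ℚ) + ((a : ℚ) + 1 + t)) := by
      rw [hA]; simp [Polynomial.eval_prod]
    have e4 : A.eval (j : ℚ) = A.eval (-y) + ((j : ℚ) + y) * Q.eval (j : ℚ) := by
      conv_lhs => rw [hAdecomp]
      simp
    rw [e1, e2, ← e3, e4]
    field_simp
    ring
  rw [Finset.sum_congr rfl hterm, Finset.sum_add_distrib, ← Finset.mul_sum,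
    alt_sum_poly l Q hQdeg,
    alt_sum_inv l y (by
      intro t ht
      have h := hx (a + l + t)
      rw [hy]
      push_cast at h ⊢
      intro hc; exact h (by linarith)), hev]
  have e5 : ∏ t ∈ Finset.range (l + 1), (y + t)
      = Rx x (a + 2 * l + 1) / Rx x (a + l) := by
    have h := Rx_add x (a + l) (l + 1)
    rw [show a + l + (l + 1) = a + 2 * l + 1 by ring] at h
    rw [eq_div_iff (Rx_ne_zero hx _), h, mul_comm]
    congr 1
    refine Finset.prod_congr rfl fun t _ => ?_
    rw [hy]; push_cast; ring
  rw [e5]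
  have h1 := Rx_ne_zero hx (a + 2 * l + 1)
  have h2 := Rx_ne_zero hx (a + l)
  field_simp
  ring

set_option maxHeartbeats 2000000 in
/-- Determinant of `G(n)⁻¹`. -/
theorem catbert_det_inverse (p q : ℤ) (a n : ℕ) (hp : 2 ≤ p) (hq : Int.gcd p q = 1)
    (hG : IsUnit (GHankel p q a n)) :
    ((GHankel p q a n)⁻¹).det
      = ∏ k ∈ Finset.range n,
          (p : ℚ) ^ (2 * (2 * k + a))
            * ((2 * (k : ℚ) * p + a * p + q) / (q : ℚ))
            * gchoose (2 * (k : ℚ) + (a : ℚ) + (q : ℚ) / (p : ℚ) - 1) k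
            * gchoose (2 * (k : ℚ) + (a : ℚ) + (q : ℚ) / (p : ℚ) - 1) (k + a) := by
  classical
  set x : ℚ := (q : ℚ) / (p : ℚ) with hxdef
  have hp0 : (p : ℚ) ≠ 0 := Int.cast_ne_zero.mpr (by omega)
  have hq0 : q ≠ 0 := by
    intro h
    rw [h] at hq
    simp [Int.gcd] at hq
    omega
  have hqQ : (q : ℚ) ≠ 0 := Int.cast_ne_zero.mpr hq0
  have hx : ∀ m : ℕ, x + (m : ℚ) ≠ 0 := by
    intro m hcon
    have h1 : (q : ℚ) + (m : ℚ) * p = 0 := by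
      rw [hxdef] at hcon
      field_simp at hcon
      linarith
    have h2 : q + (m : ℤ) * p = 0 := by exact_mod_cast h1
    have hdvd : p ∣ q := ⟨-(m : ℤ), by linarith⟩
    have h3 : p.natAbs ∣ Int.gcd p q := Nat.dvd_gcd dvd_rfl (Int.natAbs_dvd_natAbs.mpr hdvd)
    rw [hq] at h3
    have h4 := Nat.le_of_dvd one_pos h3
    omega
  have hx0 : x ≠ 0 := by simpa using hx 0
  clear_value x
  have hgchoose : ∀ s : ℕ, gchoose ((s : ℚ) + x) s = Rx x (s + 1) / (x * (s.factorial : ℚ)) := by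
    intro s
    rw [gchoose]
    have h1 : ∏ i ∈ Finset.range s, ((s : ℚ) + x - i)
        = ∏ t ∈ Finset.range s, (x + (t : ℚ) + 1) := by
      rw [← Finset.prod_range_reflect (fun t => x + (t : ℚ) + 1) s]
      refine Finset.prod_congr rfl fun t ht => ?_
      simp only [Finset.mem_range] at ht
      rw [show s - 1 - t = s - (t + 1) by omega, Nat.cast_sub (by omega)]
      push_cast; ring
    have h2 : Rx x (s + 1) = x * ∏ t ∈ Finset.range s, (x + (t : ℚ) + 1) := by
      rw [Rx, Finset.prod_range_succ' (fun t => x + (t : ℚ))]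
      simp only [Nat.cast_zero, add_zero]
      rw [mul_comm]
      congr 1
      refine Finset.prod_congr rfl fun t _ => by push_cast; ring
    rw [h1, h2]
    exact (mul_div_mul_left _ _ hx0).symm
  have hGentry : ∀ s : ℕ, (1 : ℚ) / gcat p q s
      = x * (s.factorial : ℚ) / ((p : ℚ) ^ (2 * s) * Rx x (s + 1)) := by
    intro s
    rw [gcat, ← hxdef, hgchoose s]
    have hR := Rx_ne_zero hx (s + 1)
    have hf : ((s.factorial : ℕ) : ℚ) ≠ 0 := Nat.cast_ne_zero.mpr (Nat.factorial_ne_zero _)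
    rw [div_eq_div_iff (by positivity) (by positivity)]
    field_simp
  have hfactQ : ∀ m : ℕ, ((m.factorial : ℕ) : ℚ) ≠ 0 :=
    fun m => Nat.cast_ne_zero.mpr (Nat.factorial_ne_zero _)
  set G := GHankel p q a n with hGdef
  set B : Matrix (Fin n) (Fin n) ℚ := Matrix.of (fun j l : Fin n =>
    if (j : ℕ) ≤ (l : ℕ) then
      (-1 : ℚ) ^ (j : ℕ) * (((l : ℕ).choose (j : ℕ) : ℕ) : ℚ) * (p : ℚ) ^ (2 * (j : ℕ))
          * Rx x (a + (l : ℕ) + (j : ℕ)) / (((a + (j : ℕ)).factorial : ℕ) : ℚ)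
        * ((-1 : ℚ) ^ (l : ℕ) * (((a + (l : ℕ)).factorial : ℕ) : ℚ)
            / ((p : ℚ) ^ (2 * (l : ℕ)) * Rx x (a + 2 * (l : ℕ))))
    else 0) with hBdef
  have hBut : B.BlockTriangular id := by
    intro i j hij
    simp only [hBdef, Matrix.of_apply]
    rw [if_neg]
    exact Nat.not_le.mpr (by exact_mod_cast hij)
  have hsq : ∀ m : ℕ, (-1 : ℚ) ^ m * (-1 : ℚ) ^ m = 1 := by
    intro m
    rw [← pow_add]
    exact Even.neg_one_pow ⟨m, rfl⟩
  have hsqA : ∀ m : ℕ, (-1 : ℚ) ^ (m * 2) = 1 := fun m => by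
    rw [pow_mul', neg_one_sq, one_pow]
  have hsqB : ∀ m : ℕ, (-1 : ℚ) ^ (2 * m) = 1 := fun m => by
    rw [pow_mul, neg_one_sq, one_pow]
  have hBdiag : ∀ l : Fin n, B l l = 1 := by
    intro l
    simp only [hBdef, Matrix.of_apply, le_refl, if_true, Nat.choose_self, Nat.cast_one]
    rw [show a + (l : ℕ) + (l : ℕ) = a + 2 * (l : ℕ) by ring]
    have h1 := Rx_ne_zero hx (a + 2 * (l : ℕ))
    have h2 := hfactQ (a + (l : ℕ))
    have h3 : (p : ℚ) ^ (2 * (l : ℕ)) ≠ 0 := pow_ne_zero _ hp0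
    field_simp
    linear_combination ((p : ℚ) ^ (2 * (l : ℕ)) * Rx x (a + 2 * (l : ℕ))
      * (((a + (l : ℕ)).factorial : ℕ) : ℚ)) * hsq (l : ℕ)
      + (1 - (p : ℚ) ^ (2 * (l : ℕ)) * Rx x (a + 2 * (l : ℕ))
        * (((a + (l : ℕ)).factorial : ℕ) : ℚ)) * hsqA (l : ℕ)
  have hdetB : B.det = 1 := by
    rw [Matrix.det_of_upperTriangular hBut]
    exact Finset.prod_eq_one fun l _ => hBdiag l
  have hentry : ∀ i l : Fin n, (G * B) i l
      = (x * (-1 : ℚ) ^ (l : ℕ) * (((a + (l : ℕ)).factorial : ℕ) : ℚ)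
            / ((p : ℚ) ^ (2 * ((i : ℕ) + a)) * (p : ℚ) ^ (2 * (l : ℕ)) * Rx x (a + 2 * (l : ℕ))))
        * ∑ j ∈ Finset.range ((l : ℕ) + 1), (-1 : ℚ) ^ j * (((l : ℕ).choose j : ℕ) : ℚ)
            * ((((i : ℕ) + j + a).factorial : ℚ) / (((a + j).factorial : ℕ) : ℚ))
            * (Rx x (a + (l : ℕ) + j) / Rx x ((i : ℕ) + j + a + 1)) := by
    intro i l
    rw [Matrix.mul_apply]
    set F : ℕ → ℚ := fun jj => (1 / gcat p q ((i : ℕ) + jj + a)) *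
        (if jj ≤ (l : ℕ) then
          (-1 : ℚ) ^ jj * (((l : ℕ).choose jj : ℕ) : ℚ) * (p : ℚ) ^ (2 * jj)
              * Rx x (a + (l : ℕ) + jj) / (((a + jj).factorial : ℕ) : ℚ)
            * ((-1 : ℚ) ^ (l : ℕ) * (((a + (l : ℕ)).factorial : ℕ) : ℚ)
                / ((p : ℚ) ^ (2 * (l : ℕ)) * Rx x (a + 2 * (l : ℕ))))
        else 0) with hF
    have h0 : (∑ j : Fin n, G i j * B j l) = ∑ jj ∈ Finset.range n, F jj := by
      rw [← Fin.sum_univ_eq_sum_range F n]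
      exact Finset.sum_congr rfl fun j _ => rfl
    have h1 : ∑ jj ∈ Finset.range n, F jj = ∑ jj ∈ Finset.range ((l : ℕ) + 1), F jj := by
      symm
      apply Finset.sum_subset (Finset.range_subset_range.mpr (Nat.succ_le_of_lt l.isLt))
      intro jj hjn hjl
      simp only [Finset.mem_range, not_lt] at hjl
      rw [hF]
      simp only
      rw [if_neg (by omega), mul_zero]
    rw [h0, h1, Finset.mul_sum]
    refine Finset.sum_congr rfl fun jj hjj => ?_
    simp only [Finset.mem_range] at hjj
    rw [hF]
    simp only
    rw [if_pos (by omega), hGentry ((i : ℕ) + jj + a)]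
    rw [show (2 * ((i : ℕ) + jj + a)) = 2 * ((i : ℕ) + a) + 2 * jj by ring, pow_add]
    have hR1 := Rx_ne_zero hx ((i : ℕ) + jj + a + 1)
    have hR2 := Rx_ne_zero hx (a + 2 * (l : ℕ))
    have hpw1 : (p : ℚ) ^ (2 * ((i : ℕ) + a)) ≠ 0 := pow_ne_zero _ hp0
    have hpw2 : (p : ℚ) ^ (2 * jj) ≠ 0 := pow_ne_zero _ hp0
    have hpw3 : (p : ℚ) ^ (2 * (l : ℕ)) ≠ 0 := pow_ne_zero _ hp0
    have hf1 := hfactQ ((i : ℕ) + jj + a)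
    have hf2 := hfactQ (a + jj)
    field_simp
  have hlow : (G * B).BlockTriangular OrderDual.toDual := by
    intro i l h
    have hil : (i : ℕ) < (l : ℕ) := by
      have := OrderDual.toDual_lt_toDual.mp h
      exact_mod_cast this
    rw [hentry i l, coreA hx a (i : ℕ) (l : ℕ) hil, mul_zero]
  set d : ℕ → ℚ := fun k =>
    x * (((a + k).factorial : ℕ) : ℚ) * ((k.factorial : ℕ) : ℚ) * Rx x k * Rx x (a + k)
      / ((p : ℚ) ^ (2 * (2 * k + a)) * Rx x (a + 2 * k) * Rx x (a + 2 * k + 1)) with hd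
  have hdiagval : ∀ l : Fin n, (G * B) l l = d (l : ℕ) := by
    intro l
    rw [hentry l l, coreB hx a (l : ℕ), hd]
    simp only
    rw [show 2 * (2 * (l : ℕ) + a) = 2 * ((l : ℕ) + a) + 2 * (l : ℕ) by ring, pow_add]
    have hR2 := Rx_ne_zero hx (a + 2 * (l : ℕ))
    have hR3 := Rx_ne_zero hx (a + 2 * (l : ℕ) + 1)
    have hpw1 : (p : ℚ) ^ (2 * ((l : ℕ) + a)) ≠ 0 := pow_ne_zero _ hp0
    have hpw3 : (p : ℚ) ^ (2 * (l : ℕ)) ≠ 0 := pow_ne_zero _ hp0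
    field_simp
    ring_nf
    simp only [hsqA, hsqB]
    ring
  have hdetG : G.det = ∏ k ∈ Finset.range n, d k := by
    have h1 : (G * B).det = ∏ l : Fin n, (G * B) l l :=
      Matrix.det_of_lowerTriangular _ hlow
    rw [Matrix.det_mul, hdetB, mul_one] at h1
    rw [h1, Finset.prod_congr rfl fun l _ => hdiagval l]
    exact Fin.prod_univ_eq_prod_range d n
  rw [Matrix.det_nonsing_inv, Ring.inverse_eq_inv, hdetG, ← Finset.prod_inv_distrib]
  refine Finset.prod_congr rfl fun k hk => ?_
  refine inv_eq_of_mul_eq_one_right ?_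
  have e3 : (2 * (k : ℚ) * p + (a : ℚ) * p + q) / (q : ℚ) = (x + ((a + 2 * k : ℕ) : ℚ)) / x := by
    rw [hxdef]
    push_cast
    field_simp
    ring
  have e1 : gchoose (2 * (k : ℚ) + (a : ℚ) + x - 1) k
      = Rx x (a + 2 * k) / (Rx x (a + k) * ((k.factorial : ℕ) : ℚ)) := by
    rw [gchoose]
    have h1 : ∏ i ∈ Finset.range k, (2 * (k : ℚ) + (a : ℚ) + x - 1 - i)
        = ∏ t ∈ Finset.range k, (x + ((a + k : ℕ) : ℚ) + t) := by
      rw [← Finset.prod_range_reflect (fun t => x + ((a + k : ℕ) : ℚ) + t) k]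
      refine Finset.prod_congr rfl fun t ht => ?_
      simp only [Finset.mem_range] at ht
      rw [show k - 1 - t = k - (t + 1) by omega, Nat.cast_sub (by omega)]
      push_cast; ring
    have h2 := Rx_add x (a + k) k
    rw [show a + k + k = a + 2 * k by ring] at h2
    rw [h1, h2]
    exact (mul_div_mul_left _ _ (Rx_ne_zero hx (a + k))).symm
  have e2 : gchoose (2 * (k : ℚ) + (a : ℚ) + x - 1) (k + a)
      = Rx x (a + 2 * k) / (Rx x k * (((k + a).factorial : ℕ) : ℚ)) := by
    rw [gchoose]
    have h1 : ∏ i ∈ Finset.range (k + a), (2 * (k : ℚ) + (a : ℚ) + x - 1 - i)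
        = ∏ t ∈ Finset.range (k + a), (x + (k : ℚ) + t) := by
      rw [← Finset.prod_range_reflect (fun t => x + (k : ℚ) + t) (k + a)]
      refine Finset.prod_congr rfl fun t ht => ?_
      simp only [Finset.mem_range] at ht
      rw [show k + a - 1 - t = k + a - (t + 1) by omega, Nat.cast_sub (by omega)]
      push_cast; ring
    have h2 := Rx_add x k (k + a)
    rw [show k + (k + a) = a + 2 * k by ring] at h2
    rw [h1, h2]
    exact (mul_div_mul_left _ _ (Rx_ne_zero hx k)).symm
  rw [e3, e1, e2, hd]
  simp only
  rw [Rx_succ x (a + 2 * k), show k + a = a + k from Nat.add_comm k a]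
  have hR1 := Rx_ne_zero hx (a + 2 * k)
  have hR2 := Rx_ne_zero hx (a + k)
  have hR3 := Rx_ne_zero hx k
  have hxa : x + ((a + 2 * k : ℕ) : ℚ) ≠ 0 := hx (a + 2 * k)
  have hpw : (p : ℚ) ^ (2 * (2 * k + a)) ≠ 0 := pow_ne_zero _ hp0
  have hf1 := hfactQ (a + k)
  have hf2 := hfactQ k
  have hf3 := hfactQ (a + k)
  obtain ⟨c, hcdef, hc0⟩ : ∃ c : ℚ, c = x + ((a + 2 * k : ℕ) : ℚ) ∧ c ≠ 0 := ⟨_, rfl, hxa⟩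
  rw [← hcdef]
  field_simp
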